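/- Let f be differentiable and (γ, μ)-strongly-quasar-convex with respect to a global minimizer x* (f need not be smooth), and suppose the stochastic gradients satisfy E[‖g_t‖² | x₀, g₀, …, g_{t−1}] ≤ G². Running SGD with step sizes α_t = 2/(γμt) at iteration t yields, for every t ≥ 1, E‖x_t − x*‖² ≤ 4G²/(γ²μ²t). -/

import Mathlib

open MeasureTheory Finset
open scoped RealInnerProductSpace

lemma condexp_comp_clm {α : Type*} {m m0 : MeasurableSpace α} (hm : m ≤ m0) {μ : Measure α}
    [IsFiniteMeasure μ] {E F : Type*} [NormedAddCommGroup E] [NormedSpace ℝ E] [CompleteSpace E]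
    [NormedAddCommGroup F] [NormedSpace ℝ F] [CompleteSpace F]
    (L : E →L[ℝ] F) {f : α → E} (hf : Integrable f μ) :
    (fun ω => L (MeasureTheory.condExp m μ f ω)) =ᵐ[μ]
      MeasureTheory.condExp m μ (fun ω => L (f ω)) := by
  refine ae_eq_condExp_of_forall_setIntegral_eq hm (L.integrable_comp hf) ?_ ?_ ?_
  · intro s _ _
    exact (L.integrable_comp integrable_condExp).integrableOn
  · intro s hs _
    rw [L.integral_comp_comm integrable_condExp.integrableOn,
      setIntegral_condExp hm hf hs, L.integral_comp_comm hf.integrableOn]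
  · exact StronglyMeasurable.aestronglyMeasurable (L.continuous.comp_stronglyMeasurable stronglyMeasurable_condExp)

lemma sgd_inner_bound {Ω : Type*} [inst : MeasurableSpace Ω] (P : Measure Ω)
    [IsProbabilityMeasure P] {n : ℕ} (h gf fx : Ω → EuclideanSpace ℝ (Fin n))
    (hgmeas : Measurable gf) (hgint : Integrable gf P)
    (hgsq : Integrable (fun ω => ‖gf ω‖^2) P) (hhsq : Integrable (fun ω => ‖h ω‖^2) P)
    (𝓕 : MeasurableSpace Ω) (hle : 𝓕 ≤ inst)
    (hhm : Measurable[𝓕] h)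
    (hunb : MeasureTheory.condExp 𝓕 P gf =ᵐ[P] fx) :
    Integrable (fun ω => ⟪h ω, gf ω⟫) P ∧ Integrable (fun ω => ⟪h ω, fx ω⟫) P ∧
      ∫ ω, ⟪h ω, gf ω⟫ ∂P = ∫ ω, ⟪h ω, fx ω⟫ ∂P := by
  have hhmeas : Measurable[inst] h := hhm.mono hle le_rfl
  have hgL2 : MemLp gf 2 P :=
    (memLp_two_iff_integrable_sq_norm (hgmeas.aestronglyMeasurable (μ := P))).mpr hgsq
  have hhL2 : MemLp h 2 P :=
    (memLp_two_iff_integrable_sq_norm (hhmeas.aestronglyMeasurable (μ := P))).mpr hhsq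
  -- coordinates
  have key : ∀ i : Fin n,
      Integrable (fun ω => h ω i * gf ω i) P ∧
      Integrable (fun ω => h ω i * fx ω i) P ∧
      ∫ ω, h ω i * gf ω i ∂P = ∫ ω, h ω i * fx ω i ∂P := by
    intro i
    have hiL2 : MemLp (fun ω => h ω i) 2 P :=
      (EuclideanSpace.proj (𝕜 := ℝ) i).comp_memLp' hhL2
    have giL2 : MemLp (fun ω => gf ω i) 2 P :=
      (EuclideanSpace.proj (𝕜 := ℝ) i).comp_memLp' hgL2
    have hmul : Integrable ((fun ω => h ω i) * fun ω => gf ω i) P := by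
      refine memLp_one_iff_integrable.mp ?_
      have := giL2.smul hiL2 (r := 1) (hpqr := ⟨by norm_num [ENNReal.inv_two_add_inv_two]⟩)
      simpa [smul_eq_mul] using this
    have hgiint : Integrable (fun ω => gf ω i) P :=
      ((EuclideanSpace.proj (𝕜 := ℝ) i).integrable_comp hgint)
    have hi_sm : StronglyMeasurable[𝓕] (fun ω => h ω i) :=
      (((EuclideanSpace.proj (𝕜 := ℝ) i).continuous.measurable).comp hhm).stronglyMeasurable
    have e1 : MeasureTheory.condExp 𝓕 P ((fun ω => h ω i) * fun ω => gf ω i)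
        =ᵐ[P] (fun ω => h ω i) * MeasureTheory.condExp 𝓕 P (fun ω => gf ω i) :=
      condExp_mul_of_stronglyMeasurable_left hi_sm hmul hgiint
    have e2 : MeasureTheory.condExp 𝓕 P (fun ω => gf ω i) =ᵐ[P] fun ω => fx ω i := by
      have h0 := (condexp_comp_clm hle (EuclideanSpace.proj (𝕜 := ℝ) i) hgint).symm
      refine h0.trans ?_
      filter_upwards [hunb] with ω hω
      rw [hω]; rfl
    have e3 : (fun ω => h ω i) * MeasureTheory.condExp 𝓕 P (fun ω => gf ω i)
        =ᵐ[P] fun ω => h ω i * fx ω i := by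
      filter_upwards [e2] with ω hω
      simp [hω]
    have Ifx : Integrable (fun ω => h ω i * fx ω i) P :=
      ((integrable_condExp.congr e1).congr e3)
    refine ⟨hmul, Ifx, ?_⟩
    calc ∫ ω, h ω i * gf ω i ∂P
        = ∫ ω, MeasureTheory.condExp 𝓕 P ((fun ω => h ω i) * fun ω => gf ω i) ω ∂P :=
          (integral_condExp hle).symm
      _ = ∫ ω, h ω i * fx ω i ∂P := integral_congr_ae (e1.trans e3)
  have hinner_g : (fun ω => ⟪h ω, gf ω⟫) = fun ω => ∑ i, h ω i * gf ω i := by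
    funext ω
    simp [PiLp.inner_apply, RCLike.inner_apply, mul_comm]
  have hinner_f : (fun ω => ⟪h ω, fx ω⟫) = fun ω => ∑ i, h ω i * fx ω i := by
    funext ω
    simp [PiLp.inner_apply, RCLike.inner_apply, mul_comm]
  refine ⟨?_, ?_, ?_⟩
  · rw [hinner_g]; exact integrable_finset_sum _ fun i _ => (key i).1
  · rw [hinner_f]; exact integrable_finset_sum _ fun i _ => (key i).2.1
  · rw [hinner_g, hinner_f, integral_finset_sum _ fun i _ => (key i).1,
      integral_finset_sum _ fun i _ => (key i).2.1]
    exact Finset.sum_congr rfl fun i _ => (key i).2.2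


lemma rec_bound (C T : ℝ) (hC : 0 ≤ C) (hT : 1 ≤ T) :
    (1 - 2/(T+1)) * (C/T) + C/(T+1)^2 ≤ C/(T+1) := by
  have hT0 : (0:ℝ) < T := by linarith
  have hT1 : (0:ℝ) < T+1 := by linarith
  have key : C/(T+1) - ((1 - 2/(T+1)) * (C/T) + C/(T+1)^2) = C/(T*(T+1)^2) := by
    field_simp
    ring
  have : 0 ≤ C/(T*(T+1)^2) := by positivity
  linarith

theorem sgd_strongly_quasar_nonsmooth_distance
    {Ω : Type*} [MeasurableSpace Ω] (P : Measure Ω) [IsProbabilityMeasure P]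
    {n : ℕ} (f : EuclideanSpace ℝ (Fin n) → ℝ)
    (f' : EuclideanSpace ℝ (Fin n) → EuclideanSpace ℝ (Fin n))
    (xstar x₀ : EuclideanSpace ℝ (Fin n))
    (γ μ G : ℝ)
    (x g : ℕ → Ω → EuclideanSpace ℝ (Fin n))
    (hgrad : ∀ y, HasGradientAt f (f' y) y)
    (hmin : ∀ y, f xstar ≤ f y)
    (hγ0 : 0 < γ) (hγ1 : γ ≤ 1) (hμ : 0 < μ)
    (hsqc : ∀ y, f xstar ≥ f y + (1/γ) * ⟪f' y, xstar - y⟫ + (μ/2) * ‖y - xstar‖^2)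
    (hx0 : x 0 = fun _ => x₀)
    (hstep : ∀ t : ℕ, x (t+1) = fun ω => x t ω - (2/(γ*μ*((t : ℝ)+1))) • g t ω)
    (hgmeas : ∀ t, Measurable (g t))
    (hgint : ∀ t, Integrable (g t) P)
    (hgsqint : ∀ t, Integrable (fun ω => ‖g t ω‖^2) P)
    (hunbiased : ∀ t,
      MeasureTheory.condExp
          (⨆ i ∈ Finset.range t, MeasurableSpace.comap (g i) inferInstance) P (g t)
        =ᵐ[P] fun ω => f' (x t ω))
    (hmoment : ∀ t, ∀ᵐ ω ∂P,
      MeasureTheory.condExp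
          (⨆ i ∈ Finset.range t, MeasurableSpace.comap (g i) inferInstance) P
          (fun ω' => ‖g t ω'‖^2) ω ≤ G^2)
    (hsqint : ∀ t, Integrable (fun ω => ‖x t ω - xstar‖^2) P)
:    ∀ t : ℕ, 1 ≤ t → ∫ ω, ‖x t ω - xstar‖^2 ∂P ≤ 4*G^2/(γ^2*μ^2*(t : ℝ)) := by
  -- pointwise quasar-convexity consequence
  have hpt : ∀ y, γ*μ/2 * ‖y - xstar‖^2 ≤ ⟪y - xstar, f' y⟫ := by
    intro y
    have h1 := hsqc y
    have h2 := hmin y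
    have h3 : ⟪f' y, xstar - y⟫ = -⟪y - xstar, f' y⟫ := by
      rw [real_inner_comm, show xstar - y = -(y - xstar) from (neg_sub y xstar).symm,
        inner_neg_left]
    rw [h3] at h1
    have h4 : (1/γ) * (-⟪y - xstar, f' y⟫) = -(⟪y - xstar, f' y⟫/γ) := by ring
    rw [h4] at h1
    have h5 : (μ/2) * ‖y - xstar‖^2 ≤ ⟪y - xstar, f' y⟫/γ := by linarith
    rw [le_div_iff₀ hγ0] at h5
    calc γ*μ/2 * ‖y - xstar‖^2 = μ/2 * ‖y - xstar‖^2 * γ := by ring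
      _ ≤ _ := h5
  -- the filtration
  have hFle : ∀ t : ℕ,
      (⨆ i ∈ Finset.range t, MeasurableSpace.comap (g i) inferInstance)
        ≤ (inferInstance : MeasurableSpace Ω) := by
    intro t
    refine iSup_le fun i => iSup_le fun _ => ?_
    exact (hgmeas i).comap_le
  have hmono : ∀ t : ℕ,
      (⨆ i ∈ Finset.range t, MeasurableSpace.comap (g i) inferInstance)
        ≤ (⨆ i ∈ Finset.range (t+1), MeasurableSpace.comap (g i) inferInstance) := by
    intro t
    refine iSup_le fun i => iSup_le fun hi => ?_
    exact le_iSup₂ (f := fun i (_ : i ∈ Finset.range (t+1)) =>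
      MeasurableSpace.comap (g i) inferInstance) i
      (Finset.mem_range.mpr (Nat.lt_succ_of_lt (Finset.mem_range.mp hi)))
  have hgmF : ∀ t : ℕ,
      Measurable[⨆ i ∈ Finset.range (t+1), MeasurableSpace.comap (g i) inferInstance] (g t) := by
    intro t
    rw [measurable_iff_comap_le]
    exact le_iSup₂ (f := fun i (_ : i ∈ Finset.range (t+1)) =>
      MeasurableSpace.comap (g i) inferInstance) t (Finset.mem_range.mpr (Nat.lt_succ_self t))
  have hxmeasF : ∀ t : ℕ,
      Measurable[⨆ i ∈ Finset.range t, MeasurableSpace.comap (g i) inferInstance] (x t) := by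
    intro t
    induction t with
    | zero => rw [hx0]; exact measurable_const
    | succ t ih =>
      rw [hstep t]
      exact ((ih.mono (hmono t) le_rfl).sub ((hgmF t).const_smul (2/(γ*μ*((t:ℝ)+1)))))
  -- second moment bound
  have hG2 : ∀ t : ℕ, ∫ ω, ‖g t ω‖^2 ∂P ≤ G^2 := by
    intro t
    calc ∫ ω, ‖g t ω‖^2 ∂P
        = ∫ ω, MeasureTheory.condExp
            (⨆ i ∈ Finset.range t, MeasurableSpace.comap (g i) inferInstance) P
            (fun ω' => ‖g t ω'‖^2) ω ∂P := (integral_condExp (hFle t)).symm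
      _ ≤ ∫ _, G^2 ∂P := integral_mono_ae integrable_condExp (integrable_const _) (hmoment t)
      _ = G^2 := by simp
  -- key cross-term facts
  have hkey : ∀ t : ℕ,
      Integrable (fun ω => ⟪x t ω - xstar, g t ω⟫) P ∧
      Integrable (fun ω => ⟪x t ω - xstar, f' (x t ω)⟫) P ∧
      ∫ ω, ⟪x t ω - xstar, g t ω⟫ ∂P = ∫ ω, ⟪x t ω - xstar, f' (x t ω)⟫ ∂P := by
    intro t
    exact sgd_inner_bound P (fun ω => x t ω - xstar) (g t) (fun ω => f' (x t ω))
      (hgmeas t) (hgint t) (hgsqint t) (hsqint t)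
      (⨆ i ∈ Finset.range t, MeasurableSpace.comap (g i) inferInstance) (hFle t)
      ((hxmeasF t).sub measurable_const) (hunbiased t)
  have hγμ : (0:ℝ) < γ*μ := mul_pos hγ0 hμ
  -- one-step recursion
  have hrec : ∀ t : ℕ, ∫ ω, ‖x (t+1) ω - xstar‖^2 ∂P
      ≤ (1 - 2/((t:ℝ)+1)) * ∫ ω, ‖x t ω - xstar‖^2 ∂P
        + (4*G^2/(γ^2*μ^2))/((t:ℝ)+1)^2 := by
    intro t
    obtain ⟨Ig, If, Ieq⟩ := hkey t
    have hT1 : (0:ℝ) < (t:ℝ)+1 := by positivity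
    have hα : (0:ℝ) < 2/(γ*μ*((t:ℝ)+1)) := by positivity
    have hpw : ∀ ω, ‖x (t+1) ω - xstar‖^2
        = ‖x t ω - xstar‖^2 - 2*(2/(γ*μ*((t:ℝ)+1))) * ⟪x t ω - xstar, g t ω⟫
          + (2/(γ*μ*((t:ℝ)+1)))^2 * ‖g t ω‖^2 := by
      intro ω
      rw [hstep t]
      simp only
      rw [sub_right_comm, norm_sub_sq_real, real_inner_smul_right, norm_smul,
        Real.norm_eq_abs, mul_pow, sq_abs]
      ring
    have hexp : ∫ ω, ‖x (t+1) ω - xstar‖^2 ∂P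
        = ∫ ω, ‖x t ω - xstar‖^2 ∂P
          - 2*(2/(γ*μ*((t:ℝ)+1))) * ∫ ω, ⟪x t ω - xstar, g t ω⟫ ∂P
          + (2/(γ*μ*((t:ℝ)+1)))^2 * ∫ ω, ‖g t ω‖^2 ∂P := by
      have I3 : Integrable (fun ω => 2*(2/(γ*μ*((t:ℝ)+1))) * ⟪x t ω - xstar, g t ω⟫) P :=
        Ig.const_mul _
      have I4 : Integrable (fun ω => (2/(γ*μ*((t:ℝ)+1)))^2 * ‖g t ω‖^2) P :=
        (hgsqint t).const_mul _
      have I1 : Integrable (fun ω => ‖x t ω - xstar‖^2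
          - 2*(2/(γ*μ*((t:ℝ)+1))) * ⟪x t ω - xstar, g t ω⟫) P := (hsqint t).sub I3
      simp_rw [hpw]
      rw [integral_add I1 I4, integral_sub (hsqint t) I3, integral_const_mul, integral_const_mul]
    have hcross : γ*μ/2 * ∫ ω, ‖x t ω - xstar‖^2 ∂P ≤ ∫ ω, ⟪x t ω - xstar, g t ω⟫ ∂P := by
      rw [Ieq, ← integral_const_mul]
      exact integral_mono ((hsqint t).const_mul _) If (fun ω => hpt (x t ω))
    have hg2 := hG2 t
    rw [hexp]
    have e1 : 2*(2/(γ*μ*((t:ℝ)+1))) * (γ*μ/2 * ∫ ω, ‖x t ω - xstar‖^2 ∂P)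
        = 2/((t:ℝ)+1) * ∫ ω, ‖x t ω - xstar‖^2 ∂P := by
      field_simp
    have e2 : (2/(γ*μ*((t:ℝ)+1)))^2 * G^2 = (4*G^2/(γ^2*μ^2))/((t:ℝ)+1)^2 := by
      field_simp
      ring
    have h6 : 2*(2/(γ*μ*((t:ℝ)+1))) * (γ*μ/2 * ∫ ω, ‖x t ω - xstar‖^2 ∂P)
        ≤ 2*(2/(γ*μ*((t:ℝ)+1))) * ∫ ω, ⟪x t ω - xstar, g t ω⟫ ∂P :=
      mul_le_mul_of_nonneg_left hcross (by positivity)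
    have h7 : (2/(γ*μ*((t:ℝ)+1)))^2 * ∫ ω, ‖g t ω‖^2 ∂P
        ≤ (2/(γ*μ*((t:ℝ)+1)))^2 * G^2 :=
      mul_le_mul_of_nonneg_left hg2 (by positivity)
    have hring : (1 - 2/((t:ℝ)+1)) * ∫ ω, ‖x t ω - xstar‖^2 ∂P
        = ∫ ω, ‖x t ω - xstar‖^2 ∂P - 2/((t:ℝ)+1) * ∫ ω, ‖x t ω - xstar‖^2 ∂P := by
      ring
    linarith
  -- induction
  have hC : (0:ℝ) ≤ 4*G^2/(γ^2*μ^2) := by positivity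
  intro t ht
  rw [show γ^2*μ^2*(t:ℝ) = (γ^2*μ^2)*(t:ℝ) from rfl, ← div_div]
  induction t, ht using Nat.le_induction with
  | base =>
    have h0 := hrec 0
    have hD0 : (0:ℝ) ≤ ∫ ω, ‖x 0 ω - xstar‖^2 ∂P :=
      integral_nonneg fun ω => sq_nonneg _
    norm_num at h0 ⊢
    linarith
  | succ t ht ih =>
    have hT : (1:ℝ) ≤ (t:ℝ) := by exact_mod_cast ht
    have h0 := hrec t
    have hcoef : (0:ℝ) ≤ 1 - 2/((t:ℝ)+1) := by
      rw [sub_nonneg, div_le_one (by linarith)]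
      linarith
    have h1 : (1 - 2/((t:ℝ)+1)) * ∫ ω, ‖x t ω - xstar‖^2 ∂P
        ≤ (1 - 2/((t:ℝ)+1)) * ((4*G^2/(γ^2*μ^2))/(t:ℝ)) :=
      mul_le_mul_of_nonneg_left ih hcoef
    have h2 := rec_bound (4*G^2/(γ^2*μ^2)) (t:ℝ) hC hT
    push_cast
    linarith
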